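/- Suppose K_* ∈ S is a stationary point of f in the sense that N_{K_*} := R K_* − Bᵀ X_* A_{K_*} = 0, with R + Bᵀ X_* B ⪰ 0. Then for every stabilizing K ∈ S with value matrix X, f(K) − f(K_*) = Tr((X − X_*)Σ) ≥ 0 for any positive definite Σ; i.e., K_* is a global minimizer of f over S. -/

import Mathlib

open Matrix
open scoped ENNReal

/-- Spectral radius of a real square matrix, computed over ℂ. -/
noncomputable def specRad {n : ℕ} (A : Matrix (Fin n) (Fin n) ℝ) : ℝ≥0∞ :=
  spectralRadius ℂ (A.map Complex.ofReal)

/-- A real square matrix is Schur stable if its spectral radius is `< 1`. -/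
def IsSchur {n : ℕ} (A : Matrix (Fin n) (Fin n) ℝ) : Prop := specRad A < 1

section Aux

open Filter
open scoped Topology NNReal

attribute [local instance] Matrix.linftyOpNormedRing Matrix.linftyOpNormedAlgebra

/-- Entry bound for the `L∞`-operator norm. -/
lemma entry_nnnorm_le_linfty {n : ℕ} (a : Matrix (Fin n) (Fin n) ℂ) (i j : Fin n) :
    ‖a i j‖₊ ≤ ‖a‖₊ := by
  rw [Matrix.linfty_opNNNorm_def]
  refine le_trans ?_ (Finset.le_sup (f := fun k => ∑ l, ‖a k l‖₊) (Finset.mem_univ i))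
  exact Finset.single_le_sum (f := fun l => ‖a i l‖₊) (fun k _ => zero_le) (Finset.mem_univ j)

/-- Powers of a Schur-stable real matrix tend to zero entrywise. -/
lemma pow_entry_tendsto_zero {n : ℕ} {A : Matrix (Fin n) (Fin n) ℝ} (h : IsSchur A)
    (i j : Fin n) : Tendsto (fun N : ℕ => (A ^ N) i j) atTop (𝓝 0) := by
  set a : Matrix (Fin n) (Fin n) ℂ := A.map Complex.ofReal with ha
  have hpow : ∀ N : ℕ, a ^ N = (A ^ N).map Complex.ofReal := by
    intro N
    have := map_pow (Complex.ofRealHom.mapMatrix :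
      Matrix (Fin n) (Fin n) ℝ →+* Matrix (Fin n) (Fin n) ℂ) A N
    exact this.symm
  have hρ : spectralRadius ℂ a < 1 := h
  obtain ⟨r, hr1, hr2⟩ := exists_between hρ
  have hG := spectrum.pow_nnnorm_pow_one_div_tendsto_nhds_spectralRadius a
  have hev : ∀ᶠ N : ℕ in atTop, ((‖a ^ N‖₊ : ℝ≥0∞) ^ (1 / (N : ℝ))) < r :=
    hG.eventually_lt_const hr1
  have hrtop : r ≠ ⊤ := ne_top_of_lt hr2
  set c : ℝ≥0 := r.toNNReal with hc
  have hrc : (c : ℝ≥0∞) = r := ENNReal.coe_toNNReal hrtop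
  have hc1 : c < 1 := by
    have : (c : ℝ≥0∞) < 1 := hrc ▸ hr2
    exact_mod_cast this
  -- eventual norm bound ‖a^N‖ ≤ c^N
  have hbound : ∀ᶠ N : ℕ in atTop, ‖a ^ N‖ ≤ (c : ℝ) ^ N := by
    filter_upwards [hev, eventually_ge_atTop 1] with N hN hN1
    have hNne : (1 / (N : ℝ)) * (N : ℝ) = 1 := by
      field_simp
    have h1 : ((‖a ^ N‖₊ : ℝ≥0∞) ^ (1 / (N : ℝ))) ^ (N : ℝ) ≤ r ^ (N : ℝ) :=
      ENNReal.rpow_le_rpow hN.le (by positivity)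
    rw [← ENNReal.rpow_mul, hNne, ENNReal.rpow_one] at h1
    rw [← hrc, ENNReal.rpow_natCast, ← ENNReal.coe_pow] at h1
    have h2 : ‖a ^ N‖₊ ≤ c ^ N := by exact_mod_cast h1
    calc ‖a ^ N‖ = ((‖a ^ N‖₊ : ℝ≥0) : ℝ) := rfl
      _ ≤ ((c ^ N : ℝ≥0) : ℝ) := by exact_mod_cast h2
      _ = (c : ℝ) ^ N := by push_cast; ring
  have hnorm0 : Tendsto (fun N : ℕ => a ^ N) atTop (𝓝 0) :=
    squeeze_zero_norm' hbound
      (tendsto_pow_atTop_nhds_zero_of_lt_one c.coe_nonneg (by exact_mod_cast hc1))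
  have hnorm : Tendsto (fun N : ℕ => ‖a ^ N‖) atTop (𝓝 0) :=
    tendsto_norm_zero.comp hnorm0
  refine squeeze_zero_norm' (Eventually.of_forall fun N => ?_) hnorm
  have : ‖(a ^ N) i j‖ ≤ ‖a ^ N‖ := by
    have := entry_nnnorm_le_linfty (a ^ N) i j
    exact_mod_cast this
  calc ‖(A ^ N) i j‖ = ‖(a ^ N) i j‖ := by
        rw [hpow]; simp [Matrix.map_apply]
    _ ≤ ‖a ^ N‖ := this

/-- A symmetric solution of a Lyapunov-type equation with PSD inhomogeneity and a
Schur-stable matrix is positive semidefinite. -/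
lemma posSemidef_of_lyap {n : ℕ} {A D M : Matrix (Fin n) (Fin n) ℝ}
    (hD : Dᵀ = D) (hM : M.PosSemidef) (hA : IsSchur A)
    (heq : Aᵀ * D * A + M = D) : D.PosSemidef := by
  rw [Matrix.posSemidef_iff_dotProduct_mulVec]
  constructor
  · show Dᴴ = D
    rw [Matrix.conjTranspose_eq_transpose_of_trivial, hD]
  intro v
  rw [star_trivial]
  set w : ℕ → Fin n → ℝ := fun N => (A ^ N) *ᵥ v with hwdef
  have hstep : ∀ u : Fin n → ℝ, (A *ᵥ u) ⬝ᵥ D *ᵥ (A *ᵥ u) ≤ u ⬝ᵥ D *ᵥ u := by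
    intro u
    have h2 : (A *ᵥ u) ⬝ᵥ D *ᵥ (A *ᵥ u) = u ⬝ᵥ (Aᵀ * D * A) *ᵥ u := by
      rw [Matrix.mulVec_mulVec, ← Matrix.vecMul_transpose, ← Matrix.dotProduct_mulVec,
        Matrix.mulVec_mulVec, Matrix.mul_assoc]
    have h3 : Aᵀ * D * A = D - M := eq_sub_of_add_eq heq
    have h4 : (0 : ℝ) ≤ u ⬝ᵥ M *ᵥ u := by simpa [star_trivial] using hM.dotProduct_mulVec_nonneg u
    rw [h2, h3, Matrix.sub_mulVec, dotProduct_sub]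
    linarith
  have hmono : ∀ N : ℕ, w N ⬝ᵥ D *ᵥ w N ≤ v ⬝ᵥ D *ᵥ v := by
    intro N
    induction N with
    | zero => simp [hwdef]
    | succ k ih =>
      have h1 : w (k + 1) = A *ᵥ w k := by
        simp [hwdef, pow_succ', Matrix.mulVec_mulVec]
      calc w (k + 1) ⬝ᵥ D *ᵥ w (k + 1) = (A *ᵥ w k) ⬝ᵥ D *ᵥ (A *ᵥ w k) := by rw [h1]
        _ ≤ w k ⬝ᵥ D *ᵥ w k := hstep (w k)
        _ ≤ v ⬝ᵥ D *ᵥ v := ih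
  have hwi : ∀ i, Tendsto (fun N : ℕ => w N i) atTop (𝓝 0) := by
    intro i
    have : Tendsto (fun N : ℕ => ∑ j, (A ^ N) i j * v j) atTop
        (𝓝 (∑ j : Fin n, 0 * v j)) :=
      tendsto_finset_sum _ fun j _ => (pow_entry_tendsto_zero hA i j).mul_const (v j)
    simpa [hwdef, Matrix.mulVec, dotProduct] using this
  have hlim : Tendsto (fun N : ℕ => w N ⬝ᵥ D *ᵥ w N) atTop (𝓝 0) := by
    have : Tendsto (fun N : ℕ => ∑ i, w N i * ∑ j, D i j * w N j) atTop
        (𝓝 (∑ i : Fin n, 0 * ∑ j : Fin n, D i j * 0)) :=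
      tendsto_finset_sum _ fun i _ =>
        (hwi i).mul (tendsto_finset_sum _ fun j _ => tendsto_const_nhds.mul (hwi j))
    simpa [dotProduct, Matrix.mulVec] using this
  exact le_of_tendsto hlim (Eventually.of_forall hmono)

/-- The trace of a real PSD matrix is nonnegative. -/
lemma trace_nonneg_of_posSemidef {n : ℕ} {M : Matrix (Fin n) (Fin n) ℝ}
    (h : M.PosSemidef) : 0 ≤ M.trace := by
  rw [Matrix.trace]
  refine Finset.sum_nonneg fun i _ => ?_
  have := h.dotProduct_mulVec_nonneg (Pi.single i 1)
  simpa [Matrix.diag, Matrix.mulVec_single, single_dotProduct] using this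

/-- The trace of a product of two real PSD matrices is nonnegative. -/
lemma trace_mul_nonneg_of_posSemidef {n : ℕ} {D S : Matrix (Fin n) (Fin n) ℝ}
    (hD : D.PosSemidef) (hS : S.PosSemidef) : 0 ≤ (D * S).trace := by
  obtain ⟨C, hC⟩ : ∃ C : Matrix (Fin n) (Fin n) ℝ, S = Cᴴ * C := by
    open scoped MatrixOrder in
    obtain ⟨B, hB⟩ := CStarAlgebra.nonneg_iff_eq_star_mul_self.mp hS.nonneg
    exact ⟨B, hB⟩
  rw [hC, ← Matrix.mul_assoc, Matrix.trace_mul_comm, ← Matrix.mul_assoc]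
  exact trace_nonneg_of_posSemidef (hD.mul_mul_conjTranspose_same C)

end Aux

/-- A stationary stabilizing gain with `R + BᵀX_*B ⪰ 0` is a global minimizer
of `f(K) = Tr(XΣ)` over the stabilizing gains. -/
theorem stmt10 {n m : ℕ} (A : Matrix (Fin n) (Fin n) ℝ) (B : Matrix (Fin n) (Fin m) ℝ)
    (Q : Matrix (Fin n) (Fin n) ℝ) (R : Matrix (Fin m) (Fin m) ℝ)
    (Sig : Matrix (Fin n) (Fin n) ℝ)
    (hQ : Qᵀ = Q) (hR : Rᵀ = R) (hSig : Sig.PosDef)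
    (Ks : Matrix (Fin m) (Fin n) ℝ) (Xs : Matrix (Fin n) (Fin n) ℝ)
    (hXs : Xsᵀ = Xs) (hSs : IsSchur (A - B * Ks))
    (hLyaps : (A - B * Ks)ᵀ * Xs * (A - B * Ks) + Q + Ksᵀ * R * Ks = Xs)
    (hNs : R * Ks - Bᵀ * Xs * (A - B * Ks) = 0)
    (hPs : (R + Bᵀ * Xs * B).PosSemidef) :
    ∀ (K : Matrix (Fin m) (Fin n) ℝ) (X : Matrix (Fin n) (Fin n) ℝ),
      Xᵀ = X → IsSchur (A - B * K) →
      (A - B * K)ᵀ * X * (A - B * K) + Q + Kᵀ * R * K = X →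
      (X * Sig).trace - (Xs * Sig).trace = ((X - Xs) * Sig).trace ∧
      0 ≤ ((X - Xs) * Sig).trace := by
  intro K X hX hS hLyap
  constructor
  · rw [Matrix.sub_mul, Matrix.trace_sub]
  -- Key algebraic identity (using stationarity)
  have expand : (A - B * K)ᵀ * Xs * (A - B * K) + Kᵀ * R * K =
      (A - B * Ks)ᵀ * Xs * (A - B * Ks) + Ksᵀ * R * Ks +
      (K - Ks)ᵀ * (R + Bᵀ * Xs * B) * (K - Ks) +
      (K - Ks)ᵀ * (R * Ks - Bᵀ * Xs * (A - B * Ks)) +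
      (R * Ks - Bᵀ * Xs * (A - B * Ks))ᵀ * (K - Ks) := by
    simp only [Matrix.transpose_mul, Matrix.transpose_sub, Matrix.transpose_add, hR, hXs,
      Matrix.transpose_transpose]
    simp only [Matrix.sub_mul, Matrix.mul_sub, Matrix.add_mul, Matrix.mul_add, Matrix.mul_assoc]
    abel
  rw [hNs] at expand
  simp only [Matrix.mul_zero, Matrix.transpose_zero, Matrix.zero_mul, add_zero] at expand
  -- Difference Lyapunov equation
  have h1 : X - Xs = (A - B * K)ᵀ * (X - Xs) * (A - B * K) +
      (K - Ks)ᵀ * (R + Bᵀ * Xs * B) * (K - Ks) := by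
    rw [← sub_eq_zero]
    have hid : X - Xs - ((A - B * K)ᵀ * (X - Xs) * (A - B * K) +
        (K - Ks)ᵀ * (R + Bᵀ * Xs * B) * (K - Ks)) =
        -(((A - B * K)ᵀ * X * (A - B * K) + Q + Kᵀ * R * K) - X) +
        (((A - B * Ks)ᵀ * Xs * (A - B * Ks) + Q + Ksᵀ * R * Ks) - Xs) +
        (((A - B * K)ᵀ * Xs * (A - B * K) + Kᵀ * R * K) -
          ((A - B * Ks)ᵀ * Xs * (A - B * Ks) + Ksᵀ * R * Ks +
            (K - Ks)ᵀ * (R + Bᵀ * Xs * B) * (K - Ks))) := by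
      simp only [Matrix.sub_mul, Matrix.mul_sub, Matrix.add_mul, Matrix.mul_add, Matrix.mul_assoc]
      abel
    rw [hid, sub_eq_zero.mpr hLyap, sub_eq_zero.mpr hLyaps, sub_eq_zero.mpr expand]
    simp
  -- PSD of the inhomogeneity
  have hMpsd : ((K - Ks)ᵀ * (R + Bᵀ * Xs * B) * (K - Ks)).PosSemidef := by
    have := hPs.conjTranspose_mul_mul_same (K - Ks)
    rwa [Matrix.conjTranspose_eq_transpose_of_trivial] at this
  have hDsym : (X - Xs)ᵀ = X - Xs := by rw [Matrix.transpose_sub, hX, hXs]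
  have hDpsd : (X - Xs).PosSemidef :=
    posSemidef_of_lyap hDsym hMpsd hS h1.symm
  exact trace_mul_nonneg_of_posSemidef hDpsd hSig.posSemidef
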